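/- Collapse of the wave function for unbiased information transfer (trace-distance form): let B ∈ B(K) be self-adjoint, A := T(1 ⊗ B), and Σ := ‖T(1 ⊗ B²) − A²‖^{1/2}. Let ψ_x and ψ_y be unit vectors in H with A ψ_x = x ψ_x and A ψ_y = y ψ_y for real numbers x ≠ y. Then for all complex numbers α, β with |α|² + |β|² = 1 and every orthogonal projection P ∈ B(H), writing ψ := α ψ_x + β ψ_y, one has |⟨ψ, R(P) ψ⟩ − |α|² ⟨ψ_x, R(P) ψ_x⟩ − |β|² ⟨ψ_y, R(P) ψ_y⟩| ≤ (Σ/|x−y|) / √(1 + 4 (Σ/|x−y|)²). -/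
import Mathlib


open ContinuousLinearMap

/-! The Hilbert tensor product `H ⊗ K` is modelled by a Hilbert space `L` together
with two commuting unital ⋆-homomorphisms `ι₁ : B(H) → B(L)` and `ι₂ : B(K) → B(L)`
(playing the roles of `X ↦ X ⊗ 1` and `Y ↦ 1 ⊗ Y`). Given an isometry
`V : H → L`, the quantum operation is `T(X) = V† X V` and its restriction to the
system is `R(P) = T(ι₁ P)`. -/

variable {H K L : Type*}
  [NormedAddCommGroup H] [InnerProductSpace ℂ H] [CompleteSpace H]
  [NormedAddCommGroup K] [InnerProductSpace ℂ K] [CompleteSpace K]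
  [NormedAddCommGroup L] [InnerProductSpace ℂ L] [CompleteSpace L]

/-- The quantum operation `T(X) = V† X V` in Stinespring form. -/
noncomputable def qop (V : H →L[ℂ] L) (X : L →L[ℂ] L) : H →L[ℂ] H :=
  adjoint V ∘L X ∘L V

open scoped InnerProductSpace

/-- Symmetry of a self-adjoint continuous linear map. -/
lemma sa_symm {E : Type*} [NormedAddCommGroup E] [InnerProductSpace ℂ E] [CompleteSpace E]
    {T : E →L[ℂ] E} (h : IsSelfAdjoint T) (u v : E) : ⟪T u, v⟫_ℂ = ⟪u, T v⟫_ℂ := by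
  have h2 := adjoint_inner_left T v u
  rwa [isSelfAdjoint_iff'.mp h] at h2

/-- Pull a real number out of a complex inner-self equation. -/
lemma norm_sq_of_inner_self {E : Type*} [NormedAddCommGroup E] [InnerProductSpace ℂ E]
    {v : E} {t : ℝ} (h : ⟪v, v⟫_ℂ = (t : ℂ)) : ‖v‖ ^ 2 = t := by
  have h2 : ((t : ℝ) : ℂ) = (‖v‖ : ℂ) ^ 2 := by rw [← h, inner_self_eq_norm_sq_to_K]; rfl
  exact_mod_cast h2.symm

lemma norm_one_of_inner_self {E : Type*} [NormedAddCommGroup E] [InnerProductSpace ℂ E]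
    {v : E} (h : ⟪v, v⟫_ℂ = 1) : ‖v‖ = 1 := by
  have h2 : ‖v‖ ^ 2 = 1 := norm_sq_of_inner_self (by rw [h]; norm_num)
  nlinarith [norm_nonneg v]


/-- Final elementary inequality: if `d r ≤ 2 σ √(1-r²)` then `r/2 ≤ σ/√(d²+4σ²)`. -/
lemma collapse_aux_ineq {d sig r : ℝ} (hd : 0 < d) (hr0 : 0 ≤ r) (hr1 : r ≤ 1)
    (hsig0 : 0 ≤ sig) (hmain : d * r ≤ 2 * sig * Real.sqrt (1 - r ^ 2)) :
    r / 2 ≤ sig / Real.sqrt (d ^ 2 + 4 * sig ^ 2) := by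
  set M : ℝ := Real.sqrt (d ^ 2 + 4 * sig ^ 2) with hMdef
  have hM2 : M ^ 2 = d ^ 2 + 4 * sig ^ 2 := Real.sq_sqrt (by positivity)
  have hM : 0 < M := Real.sqrt_pos.mpr (by positivity)
  have hr2le : r ^ 2 ≤ 1 := by
    calc r ^ 2 ≤ 1 ^ 2 := pow_le_pow_left₀ hr0 hr1 2
      _ = 1 := one_pow 2
  have hsq1 : Real.sqrt (1 - r ^ 2) ^ 2 = 1 - r ^ 2 := Real.sq_sqrt (by linarith)
  have hprod : (d * r) * (d * r)
      ≤ (2 * sig * Real.sqrt (1 - r ^ 2)) * (2 * sig * Real.sqrt (1 - r ^ 2)) :=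
    mul_le_mul hmain hmain (by positivity) (by positivity)
  have hsq2 : (r * M) ^ 2 ≤ (2 * sig) ^ 2 := by nlinarith [hM2, hsq1, hprod, sq_nonneg r, sq_nonneg sig]
  have h3 := Real.sqrt_le_sqrt hsq2
  rw [Real.sqrt_sq (by positivity), Real.sqrt_sq (by positivity)] at h3
  rw [div_le_div_iff₀ (by norm_num) hM]
  nlinarith [h3]

/-- Rewriting of the right-hand side. -/
lemma collapse_aux_rhs {d sig : ℝ} (hd : 0 < d) (hsig0 : 0 ≤ sig) :
    (sig / d) / Real.sqrt (1 + 4 * (sig / d) ^ 2)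
      = sig / Real.sqrt (d ^ 2 + 4 * sig ^ 2) := by
  have h1 : 1 + 4 * (sig / d) ^ 2 = (d ^ 2 + 4 * sig ^ 2) / d ^ 2 := by
    field_simp
  have hM : 0 < Real.sqrt (d ^ 2 + 4 * sig ^ 2) := Real.sqrt_pos.mpr (by positivity)
  rw [h1, Real.sqrt_div (by positivity), Real.sqrt_sq hd.le]
  field_simp

/-- Collapse of the wave function for unbiased information transfer
(trace-distance form): with `A := T(1 ⊗ B)`, `Σ := ‖T(1 ⊗ B²) − A²‖^(1/2)`,
eigenvectors `A ψx = x ψx`, `A ψy = y ψy` (`x ≠ y`), `|α|² + |β|² = 1` and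
`ψ := α ψx + β ψy`, every orthogonal projection `P` satisfies
`|⟨ψ, R(P) ψ⟩ − |α|² ⟨ψx, R(P) ψx⟩ − |β|² ⟨ψy, R(P) ψy⟩| ≤ (Σ/|x−y|)/√(1+4(Σ/|x−y|)²)`. -/
theorem collapse_unbiased
    (ι₁ : (H →L[ℂ] H) →⋆ₐ[ℂ] (L →L[ℂ] L)) (ι₂ : (K →L[ℂ] K) →⋆ₐ[ℂ] (L →L[ℂ] L))
    (hcomm : ∀ X Y, ι₁ X * ι₂ Y = ι₂ Y * ι₁ X)
    (V : H →L[ℂ] L) (hV : adjoint V ∘L V = 1)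
    (B : K →L[ℂ] K) (hB : IsSelfAdjoint B)
    (ψx ψy : H) (hψx : ‖ψx‖ = 1) (hψy : ‖ψy‖ = 1)
    (x y : ℝ) (hxy : x ≠ y)
    (hx : qop V (ι₂ B) ψx = (x : ℂ) • ψx) (hy : qop V (ι₂ B) ψy = (y : ℂ) • ψy)
    (α β : ℂ) (hαβ : ‖α‖ ^ 2 + ‖β‖ ^ 2 = 1) :
    ∀ P : H →L[ℂ] H, IsIdempotentElem P → IsSelfAdjoint P →
      ‖⟪α • ψx + β • ψy, qop V (ι₁ P) (α • ψx + β • ψy)⟫_ℂ -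
          (‖α‖ ^ 2 : ℂ) * ⟪ψx, qop V (ι₁ P) ψx⟫_ℂ -
          (‖β‖ ^ 2 : ℂ) * ⟪ψy, qop V (ι₁ P) ψy⟫_ℂ‖ ≤
        (Real.sqrt ‖qop V (ι₂ (B ^ 2)) - qop V (ι₂ B) ^ 2‖ / |x - y|) /
          Real.sqrt (1 + 4 * (Real.sqrt ‖qop V (ι₂ (B ^ 2)) - qop V (ι₂ B) ^ 2‖ / |x - y|) ^ 2) := by
  intro P hP hPsa
  -- basic abbreviations
  have hVv : ∀ v : H, adjoint V (V v) = v := by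
    intro v
    have h2 := congrArg (fun (T : H →L[ℂ] H) => T v) hV
    simpa using h2
  have hVip : ∀ u v : H, ⟪V u, V v⟫_ℂ = ⟪u, v⟫_ℂ := by
    intro u v
    rw [← adjoint_inner_right, hVv]
  have hqop_r : ∀ (X : L →L[ℂ] L) (u w : H), ⟪u, qop V X w⟫_ℂ = ⟪V u, X (V w)⟫_ℂ := by
    intro X u w
    show ⟪u, adjoint V (X (V w))⟫_ℂ = ⟪V u, X (V w)⟫_ℂ
    exact adjoint_inner_right V u (X (V w))
  set C : L →L[ℂ] L := ι₂ B with hCdef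
  set Q : L →L[ℂ] L := ι₁ P with hQdef
  set φx : L := V ψx with hφxdef
  set φy : L := V ψy with hφydef
  have hCsa : IsSelfAdjoint C := hB.map ι₂
  have hQsa : IsSelfAdjoint Q := hPsa.map ι₁
  have hQidem : Q * Q = Q := by rw [hQdef, ← map_mul]; exact congrArg ι₁ hP
  set S : L →L[ℂ] L := Q + Q - 1 with hSdef
  have hone : IsSelfAdjoint (1 : L →L[ℂ] L) := by rw [isSelfAdjoint_iff]; exact star_one _
  have hSsa : IsSelfAdjoint S := by
    have h2 := (hQsa.add hQsa).sub hone
    simpa [hSdef] using h2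
  have hSS : S * S = 1 := by
    have hexp : (Q + Q - 1) * (Q + Q - 1)
        = (Q*Q) + (Q*Q) + (Q*Q) + (Q*Q) - Q - Q - Q - Q + 1 := by noncomm_ring
    rw [hSdef, hexp, hQidem]; abel
  have hSSv : ∀ v : L, S (S v) = v := by
    intro v
    have h2 := congrArg (fun (T : L →L[ℂ] L) => T v) hSS
    simpa [ContinuousLinearMap.mul_apply] using h2
  have hQC : Q * C = C * Q := hcomm P B
  have hSC : S * C = C * S := by
    rw [hSdef, sub_mul, add_mul, mul_sub, mul_add, hQC, one_mul, mul_one]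
  have hSCv : ∀ v : L, S (C v) = C (S v) := by
    intro v
    have h2 := congrArg (fun (T : L →L[ℂ] L) => T v) hSC
    simpa [ContinuousLinearMap.mul_apply] using h2
  have hfxy : ⟪φx, φy⟫_ℂ = ⟪ψx, ψy⟫_ℂ := by rw [hφxdef, hφydef]; exact hVip ψx ψy
  -- unit vectors
  have hφxx : ⟪φx, φx⟫_ℂ = 1 := by
    rw [hφxdef, hVip, inner_self_eq_norm_sq_to_K, hψx]; norm_num
  have hφyy : ⟪φy, φy⟫_ℂ = 1 := by
    rw [hφydef, hVip, inner_self_eq_norm_sq_to_K, hψy]; norm_num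
  -- expectation values
  have hCx : ⟪φx, C φx⟫_ℂ = (x : ℂ) := by
    have h2 := hqop_r C ψx ψx
    rw [hx, inner_smul_right, inner_self_eq_norm_sq_to_K, hψx] at h2
    rw [hφxdef, ← h2]; norm_num
  have hCy : ⟪φy, C φy⟫_ℂ = (y : ℂ) := by
    have h2 := hqop_r C ψy ψy
    rw [hy, inner_smul_right, inner_self_eq_norm_sq_to_K, hψy] at h2
    rw [hφydef, ← h2]; norm_num
  -- orthogonality of the two eigenvectors
  have horth : ⟪φx, φy⟫_ℂ = 0 := by
    have h1 : ⟪C φx, φy⟫_ℂ = ⟪φx, C φy⟫_ℂ := sa_symm hCsa φx φy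
    have h2 : ⟪C φx, φy⟫_ℂ = (x : ℂ) * ⟪φx, φy⟫_ℂ := by
      have e1 : ⟪qop V C ψx, ψy⟫_ℂ = ⟪C φx, φy⟫_ℂ := by
        show ⟪adjoint V (C (V ψx)), ψy⟫_ℂ = _
        exact adjoint_inner_left V ψy (C (V ψx))
      rw [hx, inner_smul_left] at e1
      rw [← e1, Complex.conj_ofReal, hfxy]
    have h3 : ⟪φx, C φy⟫_ℂ = (y : ℂ) * ⟪φx, φy⟫_ℂ := by
      have e1 := hqop_r C ψx ψy
      rw [hy, inner_smul_right] at e1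
      rw [hfxy, hφxdef, hφydef, ← e1]
    have h4 : ((x : ℂ) - y) * ⟪φx, φy⟫_ℂ = 0 := by
      rw [sub_mul, ← h2, ← h3, h1, sub_self]
    have h5 : ((x : ℂ) - y) ≠ 0 := by
      simp only [ne_eq, sub_eq_zero]
      exact_mod_cast hxy
    exact (mul_eq_zero.mp h4).resolve_left h5
  -- residual vectors
  set gx : L := C φx - (x : ℂ) • φx with hgxdef
  set gy : L := C φy - (y : ℂ) • φy with hgydef
  have hgxφx : ⟪φx, gx⟫_ℂ = 0 := by
    rw [hgxdef, inner_sub_right, inner_smul_right, hCx, hφxx]; ring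
  have hgxφx' : ⟪gx, φx⟫_ℂ = 0 := by
    rw [← inner_conj_symm, hgxφx, map_zero]
  have hgyφy : ⟪φy, gy⟫_ℂ = 0 := by
    rw [hgydef, inner_sub_right, inner_smul_right, hCy, hφyy]; ring
  -- the Σ bound on the residuals
  set D : H →L[ℂ] H := qop V (ι₂ (B ^ 2)) - qop V C ^ 2 with hDdef
  set sig : ℝ := Real.sqrt ‖D‖ with hsigdef
  have hsig0 : 0 ≤ sig := Real.sqrt_nonneg _
  have hCsq : ∀ v : L, (ι₂ (B ^ 2)) v = C (C v) := by
    intro v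
    rw [hCdef, map_pow, pow_two, ContinuousLinearMap.mul_apply]
  have hgbound : ∀ (φ : H) (t : ℝ), ‖φ‖ = 1 → qop V C φ = (t : ℂ) • φ →
      ‖C (V φ) - (t : ℂ) • (V φ)‖ ≤ sig := by
    intro φ t hφ heig
    have hφφ : ⟪φ, φ⟫_ℂ = 1 := by
      rw [inner_self_eq_norm_sq_to_K, hφ]; norm_num
    have hCw : ⟪V φ, C (V φ)⟫_ℂ = (t : ℂ) := by
      have h2 := hqop_r C φ φ
      rw [heig, inner_smul_right, hφφ, mul_one] at h2
      exact h2.symm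
    have hCw' : ⟪C (V φ), V φ⟫_ℂ = (t : ℂ) := by
      rw [← inner_conj_symm, hCw, Complex.conj_ofReal]
    have hC2 : ⟪C (V φ), C (V φ)⟫_ℂ = ⟪φ, qop V (ι₂ (B ^ 2)) φ⟫_ℂ := by
      rw [sa_symm hCsa, hqop_r, hCsq]
    have hA2 : ⟪φ, (qop V C ^ 2) φ⟫_ℂ = ((t : ℂ)) ^ 2 := by
      rw [pow_two, ContinuousLinearMap.mul_apply, heig, map_smul, heig, smul_smul,
        inner_smul_right, hφφ]
      ring
    have hww : ⟪V φ, V φ⟫_ℂ = 1 := by rw [hVip]; exact hφφ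
    have hDip : ⟪C (V φ) - (t : ℂ) • (V φ), C (V φ) - (t : ℂ) • (V φ)⟫_ℂ = ⟪φ, D φ⟫_ℂ := by
      have hrhs : ⟪φ, D φ⟫_ℂ = ⟪φ, qop V (ι₂ (B ^ 2)) φ⟫_ℂ - ⟪φ, (qop V C ^ 2) φ⟫_ℂ := by
        have hDap : D φ = qop V (ι₂ (B ^ 2)) φ - (qop V C ^ 2) φ := rfl
        rw [hDap, inner_sub_right]
      have j2 : ⟪C (V φ), (t : ℂ) • (V φ)⟫_ℂ = (t : ℂ) * t := by
        rw [inner_smul_right, hCw']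
      have j3 : ⟪(t : ℂ) • (V φ), C (V φ)⟫_ℂ = (t : ℂ) * t := by
        rw [inner_smul_left, hCw, Complex.conj_ofReal]
      have j4 : ⟪(t : ℂ) • (V φ), (t : ℂ) • (V φ)⟫_ℂ = (t : ℂ) * t := by
        rw [inner_smul_left, inner_smul_right, hww, Complex.conj_ofReal]; ring
      rw [hrhs, hA2, ← hC2, inner_sub_left, inner_sub_right, inner_sub_right,
        j2, j3, j4]
      ring
    have hnn : ‖C (V φ) - (t : ℂ) • (V φ)‖ ^ 2 ≤ ‖D‖ := by
      have h2 : ‖⟪φ, D φ⟫_ℂ‖ ≤ ‖D‖ := by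
        calc ‖⟪φ, D φ⟫_ℂ‖ ≤ ‖φ‖ * ‖D φ‖ := norm_inner_le_norm _ _
          _ ≤ ‖φ‖ * (‖D‖ * ‖φ‖) :=
              mul_le_mul_of_nonneg_left (D.le_opNorm φ) (norm_nonneg _)
          _ = ‖D‖ := by rw [hφ]; ring
      calc ‖C (V φ) - (t : ℂ) • (V φ)‖ ^ 2
          = ‖⟪C (V φ) - (t : ℂ) • (V φ), C (V φ) - (t : ℂ) • (V φ)⟫_ℂ‖ := by
            rw [inner_self_eq_norm_sq_to_K, norm_pow, RCLike.norm_ofReal, abs_norm]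
        _ = ‖⟪φ, D φ⟫_ℂ‖ := by rw [hDip]
        _ ≤ ‖D‖ := h2
    have h5 := Real.sqrt_le_sqrt hnn
    rwa [Real.sqrt_sq (norm_nonneg _)] at h5
  have hgx_norm : ‖gx‖ ≤ sig := hgbound ψx x hψx hx
  have hgy_norm : ‖gy‖ ≤ sig := hgbound ψy y hψy hy
  -- the key off-diagonal quantity
  set c : ℂ := ⟪φx, S φy⟫_ℂ with hcdef
  set r : ℝ := ‖c‖ with hrdef
  have hSφy : ⟪S φy, S φy⟫_ℂ = 1 := by rw [sa_symm hSsa, hSSv, hφyy]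
  have hSφx : ⟪S φx, S φx⟫_ℂ = 1 := by rw [sa_symm hSsa, hSSv, hφxx]
  have hSφy_norm : ‖S φy‖ = 1 := norm_one_of_inner_self hSφy
  have hSφx_norm : ‖S φx‖ = 1 := norm_one_of_inner_self hSφx
  have hφx_norm : ‖φx‖ = 1 := norm_one_of_inner_self hφxx
  have hφy_norm : ‖φy‖ = 1 := norm_one_of_inner_self hφyy
  have hr0 : 0 ≤ r := norm_nonneg _
  have hr1 : r ≤ 1 := by
    have h2 := norm_inner_le_norm (𝕜 := ℂ) φx (S φy)
    rw [hφx_norm, hSφy_norm] at h2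
    simpa [hrdef, hcdef] using h2
  have hSxy : ⟪S φx, φy⟫_ℂ = c := by rw [sa_symm hSsa, hcdef]
  have hySx : ⟪φy, S φx⟫_ℂ = (starRingEnd ℂ) c := by
    rw [← inner_conj_symm, hSxy]
  have hyxS : ⟪S φy, φx⟫_ℂ = (starRingEnd ℂ) c := by
    rw [← inner_conj_symm, ← hcdef]
  have hccbar : c * (starRingEnd ℂ) c = ((r : ℂ)) ^ 2 := by
    have h2 := RCLike.mul_conj (K := ℂ) c
    rw [h2, hrdef]; rfl
  -- the key identity
  have hkey : ((x : ℂ) - y) * c = ⟪-gx, S φy⟫_ℂ + ⟪S φx, gy⟫_ℂ := by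
    have e1 : ⟪gx, S φy⟫_ℂ = ⟪C φx, S φy⟫_ℂ - (x : ℂ) * c := by
      rw [hgxdef, inner_sub_left, inner_smul_left, Complex.conj_ofReal, hcdef]
    have e2 : ⟪S φx, gy⟫_ℂ = ⟪S φx, C φy⟫_ℂ - (y : ℂ) * c := by
      rw [hgydef, inner_sub_right, inner_smul_right, hSxy]
    have e3 : ⟪C φx, S φy⟫_ℂ = ⟪S φx, C φy⟫_ℂ := by
      rw [sa_symm hCsa, ← hSCv, ← sa_symm hSsa]
    rw [inner_neg_left, e1, e2, e3]; ring
  -- bound the two terms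
  have hsub_norm1 : ‖S φy - c • φx‖ = Real.sqrt (1 - r ^ 2) := by
    have i2 : ⟪S φy, c • φx⟫_ℂ = c * (starRingEnd ℂ) c := by
      rw [inner_smul_right, hyxS]
    have i3 : ⟪c • φx, S φy⟫_ℂ = (starRingEnd ℂ) c * c := by
      rw [inner_smul_left, ← hcdef]
    have i4 : ⟪c • φx, c • φx⟫_ℂ = (starRingEnd ℂ) c * c := by
      rw [inner_smul_left, inner_smul_right, hφxx]; ring
    have hwn : ⟪S φy - c • φx, S φy - c • φx⟫_ℂ = ((1 - r ^ 2 : ℝ) : ℂ) := by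
      rw [inner_sub_left, inner_sub_right, inner_sub_right, hSφy, i2, i3, i4]
      push_cast
      linear_combination -hccbar
    have hwn2 : ‖S φy - c • φx‖ ^ 2 = 1 - r ^ 2 := norm_sq_of_inner_self hwn
    rw [← hwn2, Real.sqrt_sq (norm_nonneg _)]
  have hsub_norm2 : ‖S φx - (starRingEnd ℂ) c • φy‖ = Real.sqrt (1 - r ^ 2) := by
    have i2 : ⟪S φx, (starRingEnd ℂ) c • φy⟫_ℂ = (starRingEnd ℂ) c * c := by
      rw [inner_smul_right, hSxy]
    have i3 : ⟪(starRingEnd ℂ) c • φy, S φx⟫_ℂ = c * (starRingEnd ℂ) c := by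
      rw [inner_smul_left, hySx, Complex.conj_conj]
    have i4 : ⟪(starRingEnd ℂ) c • φy, (starRingEnd ℂ) c • φy⟫_ℂ
        = c * (starRingEnd ℂ) c := by
      rw [inner_smul_left, inner_smul_right, hφyy, Complex.conj_conj]; ring
    have hwn : ⟪S φx - (starRingEnd ℂ) c • φy, S φx - (starRingEnd ℂ) c • φy⟫_ℂ
        = ((1 - r ^ 2 : ℝ) : ℂ) := by
      rw [inner_sub_left, inner_sub_right, inner_sub_right, hSφx, i2, i3, i4]
      push_cast
      linear_combination -hccbar
    have hwn2 : ‖S φx - (starRingEnd ℂ) c • φy‖ ^ 2 = 1 - r ^ 2 := norm_sq_of_inner_self hwn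
    rw [← hwn2, Real.sqrt_sq (norm_nonneg _)]
  have hbound1 : ‖⟪gx, S φy⟫_ℂ‖ ≤ sig * Real.sqrt (1 - r ^ 2) := by
    have hsplit : ⟪gx, S φy⟫_ℂ = ⟪gx, S φy - c • φx⟫_ℂ := by
      rw [inner_sub_right, inner_smul_right, hgxφx', mul_zero, sub_zero]
    rw [hsplit]
    calc ‖⟪gx, S φy - c • φx⟫_ℂ‖ ≤ ‖gx‖ * ‖S φy - c • φx‖ := norm_inner_le_norm _ _
      _ ≤ sig * Real.sqrt (1 - r ^ 2) := by
          rw [hsub_norm1]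
          exact mul_le_mul_of_nonneg_right hgx_norm (Real.sqrt_nonneg _)
  have hbound2 : ‖⟪S φx, gy⟫_ℂ‖ ≤ sig * Real.sqrt (1 - r ^ 2) := by
    have hsplit : ⟪S φx, gy⟫_ℂ = ⟪S φx - (starRingEnd ℂ) c • φy, gy⟫_ℂ := by
      rw [inner_sub_left, inner_smul_left, hgyφy, mul_zero, sub_zero]
    rw [hsplit]
    calc ‖⟪S φx - (starRingEnd ℂ) c • φy, gy⟫_ℂ‖
        ≤ ‖S φx - (starRingEnd ℂ) c • φy‖ * ‖gy‖ := norm_inner_le_norm _ _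
      _ ≤ Real.sqrt (1 - r ^ 2) * sig := by
          rw [hsub_norm2]
          exact mul_le_mul_of_nonneg_left hgy_norm (Real.sqrt_nonneg _)
      _ = sig * Real.sqrt (1 - r ^ 2) := by ring
  -- main inequality
  have hmain : |x - y| * r ≤ 2 * sig * Real.sqrt (1 - r ^ 2) := by
    have h1 : ‖((x : ℂ) - y) * c‖ = |x - y| * r := by
      rw [norm_mul, hrdef]
      congr 1
      have h2 : ((x : ℂ) - y) = ((x - y : ℝ) : ℂ) := by push_cast; ring
      rw [h2, Complex.norm_real, Real.norm_eq_abs]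
    calc |x - y| * r = ‖((x : ℂ) - y) * c‖ := h1.symm
      _ = ‖⟪-gx, S φy⟫_ℂ + ⟪S φx, gy⟫_ℂ‖ := by rw [hkey]
      _ ≤ ‖⟪-gx, S φy⟫_ℂ‖ + ‖⟪S φx, gy⟫_ℂ‖ := norm_add_le _ _
      _ ≤ sig * Real.sqrt (1 - r ^ 2) + sig * Real.sqrt (1 - r ^ 2) :=
          add_le_add (by rw [inner_neg_left, norm_neg]; exact hbound1) hbound2
      _ = 2 * sig * Real.sqrt (1 - r ^ 2) := by ring
  -- bound the left-hand side by r / 2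
  have hQxy : ⟪φx, Q φy⟫_ℂ = c / 2 := by
    have hSap : S φy = Q φy + Q φy - φy := by
      rw [hSdef]
      simp [ContinuousLinearMap.sub_apply, ContinuousLinearMap.add_apply,
        ContinuousLinearMap.one_apply]
    have h2 : c = 2 * ⟪φx, Q φy⟫_ℂ := by
      rw [hcdef, hSap, inner_sub_right, inner_add_right, horth]; ring
    rw [h2]; ring
  have hQyx : ⟪φy, Q φx⟫_ℂ = (starRingEnd ℂ) (c / 2) := by
    rw [← inner_conj_symm, sa_symm hQsa, hQxy]
  have hLHS : ‖⟪α • ψx + β • ψy, qop V Q (α • ψx + β • ψy)⟫_ℂ -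
      (‖α‖ ^ 2 : ℂ) * ⟪ψx, qop V Q ψx⟫_ℂ -
      (‖β‖ ^ 2 : ℂ) * ⟪ψy, qop V Q ψy⟫_ℂ‖ ≤ r / 2 := by
    have hVsum : V (α • ψx + β • ψy) = α • φx + β • φy := by
      rw [map_add, map_smul, map_smul, ← hφxdef, ← hφydef]
    have e0 : ⟪α • ψx + β • ψy, qop V Q (α • ψx + β • ψy)⟫_ℂ
        = ⟪α • φx + β • φy, Q (α • φx + β • φy)⟫_ℂ := by
      rw [hqop_r, hVsum]
    have e1 : ⟪ψx, qop V Q ψx⟫_ℂ = ⟪φx, Q φx⟫_ℂ := by rw [hqop_r, ← hφxdef]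
    have e2 : ⟪ψy, qop V Q ψy⟫_ℂ = ⟪φy, Q φy⟫_ℂ := by rw [hqop_r, ← hφydef]
    have hα : (starRingEnd ℂ) α * α = ((‖α‖ : ℂ)) ^ 2 := RCLike.conj_mul α
    have hβ : (starRingEnd ℂ) β * β = ((‖β‖ : ℂ)) ^ 2 := RCLike.conj_mul β
    have hE : ⟪α • ψx + β • ψy, qop V Q (α • ψx + β • ψy)⟫_ℂ -
        (‖α‖ ^ 2 : ℂ) * ⟪ψx, qop V Q ψx⟫_ℂ - (‖β‖ ^ 2 : ℂ) * ⟪ψy, qop V Q ψy⟫_ℂ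
        = ((starRingEnd ℂ) α * β) * (c / 2)
          + ((starRingEnd ℂ) β * α) * ((starRingEnd ℂ) (c / 2)) := by
      rw [e0, e1, e2]
      simp only [map_add, map_smul, inner_add_left, inner_add_right,
        inner_smul_left, inner_smul_right]
      rw [hQxy, hQyx]
      push_cast
      linear_combination ⟪φx, Q φx⟫_ℂ * hα + ⟪φy, Q φy⟫_ℂ * hβ
    rw [hE]
    have hc2 : ‖c / 2‖ = r / 2 := by
      rw [norm_div, hrdef]; norm_num
    calc ‖((starRingEnd ℂ) α * β) * (c / 2)
          + ((starRingEnd ℂ) β * α) * ((starRingEnd ℂ) (c / 2))‖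
        ≤ ‖((starRingEnd ℂ) α * β) * (c / 2)‖
          + ‖((starRingEnd ℂ) β * α) * ((starRingEnd ℂ) (c / 2))‖ := norm_add_le _ _
      _ = ‖α‖ * ‖β‖ * (r / 2) + ‖β‖ * ‖α‖ * (r / 2) := by
          rw [norm_mul, norm_mul, norm_mul, norm_mul, RCLike.norm_conj,
            RCLike.norm_conj, RCLike.norm_conj, hc2]
      _ = (2 * (‖α‖ * ‖β‖)) * (r / 2) := by ring
      _ ≤ 1 * (r / 2) := by
          have h2 : 2 * (‖α‖ * ‖β‖) ≤ 1 := by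
            calc 2 * (‖α‖ * ‖β‖) = 2 * ‖α‖ * ‖β‖ := by ring
              _ ≤ ‖α‖ ^ 2 + ‖β‖ ^ 2 := two_mul_le_add_sq _ _
              _ = 1 := hαβ
          have hr2 : (0 : ℝ) ≤ r / 2 := div_nonneg hr0 (by norm_num)
          exact mul_le_mul_of_nonneg_right h2 hr2
      _ = r / 2 := by ring
  -- final real arithmetic
  have hd : 0 < |x - y| := abs_pos.mpr (sub_ne_zero.mpr hxy)
  have hineq : r / 2 ≤ sig / Real.sqrt (|x - y| ^ 2 + 4 * sig ^ 2) :=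
    collapse_aux_ineq hd hr0 hr1 hsig0 hmain
  have hrhs : (sig / |x - y|) / Real.sqrt (1 + 4 * (sig / |x - y|) ^ 2)
      = sig / Real.sqrt (|x - y| ^ 2 + 4 * sig ^ 2) :=
    collapse_aux_rhs hd hsig0
  calc ‖⟪α • ψx + β • ψy, qop V Q (α • ψx + β • ψy)⟫_ℂ -
      (‖α‖ ^ 2 : ℂ) * ⟪ψx, qop V Q ψx⟫_ℂ -
      (‖β‖ ^ 2 : ℂ) * ⟪ψy, qop V Q ψy⟫_ℂ‖ ≤ r / 2 := hLHS
    _ ≤ sig / Real.sqrt (|x - y| ^ 2 + 4 * sig ^ 2) := hineq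
    _ = (sig / |x - y|) / Real.sqrt (1 + 4 * (sig / |x - y|) ^ 2) := hrhs.symm
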